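/- Let n ≥ 1 and consider polynomials over 𝔽₃ of the form f = ∏_{e ∈ E} (x_{i(e)} + ε(e)·x_{j(e)} - a(e)) where E is a multiset of size l of 'edges', each with i(e) < j(e) in [n], ε(e) ∈ {1,-1}, a(e) ∈ 𝔽₃. If the number of nonzeros of f on 𝔽₃ⁿ is positive and 2n ≥ l, then the number of nonzeros of f on 𝔽₃ⁿ is at least ⌈3^(n - l/2)⌉. -/

import Mathlib

open MvPolynomial

namespace Stmt14Aux

def Bfun (e : ℕ) : ℕ := 2 ^ (e % 2) * 3 ^ (e / 2)

lemma Bfun_even (k : ℕ) : Bfun (2 * k) = 3 ^ k := by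
  have h1 : (2 * k) % 2 = 0 := by omega
  have h2 : (2 * k) / 2 = k := by omega
  simp [Bfun, h1, h2]

lemma Bfun_odd (k : ℕ) : Bfun (2 * k + 1) = 2 * 3 ^ k := by
  have h1 : (2 * k + 1) % 2 = 1 := by omega
  have h2 : (2 * k + 1) / 2 = k := by omega
  simp [Bfun, h1, h2]

lemma Bfun_add_two (e : ℕ) : Bfun (e + 2) = 3 * Bfun e := by
  have h1 : (e + 2) % 2 = e % 2 := by omega
  have h2 : (e + 2) / 2 = e / 2 + 1 := by omega
  simp [Bfun, h1, h2, pow_succ]; ring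

lemma Bfun_succ_le (e : ℕ) : Bfun (e + 1) ≤ 2 * Bfun e := by
  rcases Nat.even_or_odd e with ⟨k, hk⟩ | ⟨k, hk⟩
  · subst hk
    rw [show k + k = 2 * k by ring, Bfun_odd, Bfun_even]
  · subst hk
    rw [show 2 * k + 1 + 1 = 2 * (k + 1) by ring, Bfun_even, Bfun_odd, pow_succ]
    omega

lemma Bfun_le_succ (e : ℕ) : Bfun e ≤ Bfun (e + 1) := by
  rcases Nat.even_or_odd e with ⟨k, hk⟩ | ⟨k, hk⟩
  · subst hk
    rw [show k + k = 2 * k by ring, Bfun_odd, Bfun_even]; omega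
  · subst hk
    rw [show 2 * k + 1 + 1 = 2 * (k + 1) by ring, Bfun_even, Bfun_odd, pow_succ]
    omega

lemma Bfun_mono : Monotone Bfun := monotone_nat_of_le_succ Bfun_le_succ

lemma Bfun_step (n l d : ℕ) (hd2 : d ≤ 2) (hdl : d ≤ l) :
    Bfun (2 * (n + 1) - l) ≤ (3 - d) * Bfun (2 * n - (l - d)) := by
  interval_cases d
  · have h1 : 2 * (n + 1) - l ≤ (2 * n - l) + 2 := by omega
    calc Bfun (2 * (n + 1) - l) ≤ Bfun ((2 * n - l) + 2) := Bfun_mono h1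
      _ = 3 * Bfun (2 * n - l) := Bfun_add_two _
      _ = (3 - 0) * Bfun (2 * n - (l - 0)) := by norm_num
  · have h1 : 2 * (n + 1) - l ≤ (2 * n - (l - 1)) + 1 := by omega
    calc Bfun (2 * (n + 1) - l) ≤ Bfun ((2 * n - (l - 1)) + 1) := Bfun_mono h1
      _ ≤ 2 * Bfun (2 * n - (l - 1)) := Bfun_succ_le _
  · have h1 : 2 * (n + 1) - l ≤ 2 * n - (l - 2) := by omega
    calc Bfun (2 * (n + 1) - l) ≤ Bfun (2 * n - (l - 2)) := Bfun_mono h1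
      _ = (3 - 2) * Bfun (2 * n - (l - 2)) := (one_mul _).symm

def redExp (k : ℕ) : ℕ := if k = 0 then 0 else if k % 2 = 0 then 2 else 1

lemma redExp_zero : redExp 0 = 0 := rfl

lemma redExp_le (k : ℕ) : redExp k ≤ k := by
  unfold redExp; split_ifs with h1 h2 <;> omega

lemma redExp_le_two (k : ℕ) : redExp k ≤ 2 := by
  unfold redExp; split_ifs <;> omega

lemma pow_eq_pow_mod_two (c : ZMod 3) (hc : c ^ 2 = 1) (k : ℕ) : c ^ k = c ^ (k % 2) := by
  conv_lhs => rw [← Nat.div_add_mod k 2]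
  rw [pow_add, pow_mul, hc, one_pow, one_mul]

lemma pow_redExp (c : ZMod 3) (k : ℕ) : c ^ redExp k = c ^ k := by
  rcases eq_or_ne k 0 with rfl | hk
  · rfl
  have hsq : c ^ 2 = 1 ∨ c = 0 := by revert c; decide
  rcases hsq with hc | rfl
  · rw [pow_eq_pow_mod_two c hc k, pow_eq_pow_mod_two c hc (redExp k)]
    congr 1
    unfold redExp; split_ifs <;> omega
  · rw [zero_pow hk, zero_pow]
    unfold redExp; split_ifs <;> omega

noncomputable def red {n : ℕ} (p : MvPolynomial (Fin n) (ZMod 3)) :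
    MvPolynomial (Fin n) (ZMod 3) :=
  ∑ m ∈ p.support, monomial (Finsupp.mapRange redExp redExp_zero m) (coeff m p)

lemma eval_red {n : ℕ} (p : MvPolynomial (Fin n) (ZMod 3)) (x : Fin n → ZMod 3) :
    eval x (red p) = eval x p := by
  rw [red, map_sum, eval_eq' x p]
  refine Finset.sum_congr rfl fun m _ => ?_
  rw [eval_monomial, Finsupp.prod_fintype _ _ (fun i => pow_zero _)]
  congr 1
  refine Finset.prod_congr rfl fun i _ => ?_
  rw [Finsupp.mapRange_apply, pow_redExp]

lemma degreeOf_red_le {n : ℕ} (p : MvPolynomial (Fin n) (ZMod 3)) (i : Fin n) :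
    (red p).degreeOf i ≤ 2 := by
  rw [degreeOf_le_iff]
  intro m hm
  classical
  obtain ⟨m₀, _, hm₀⟩ := Finset.mem_biUnion.mp (support_sum (by unfold red at hm; exact hm))
  have := support_monomial_subset hm₀
  rw [Finset.mem_singleton] at this
  subst this
  rw [Finsupp.mapRange_apply]
  exact redExp_le_two _

lemma totalDegree_red_le {n : ℕ} (p : MvPolynomial (Fin n) (ZMod 3)) :
    (red p).totalDegree ≤ p.totalDegree := by
  refine (totalDegree_finset_sum _ _).trans (Finset.sup_le fun m hm => ?_)
  refine (totalDegree_monomial_le _ _).trans ?_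
  refine le_trans ?_ (le_totalDegree hm)
  rw [Finsupp.sum_fintype _ _ (fun i => rfl), Finsupp.sum_fintype _ _ (fun i => rfl)]
  exact Finset.sum_le_sum fun i _ => (Finsupp.mapRange_apply ..).trans_le (redExp_le _)

lemma AF3 (n : ℕ) : ∀ (l : ℕ) (h : MvPolynomial (Fin n) (ZMod 3)), h ≠ 0 →
    (∀ i, h.degreeOf i ≤ 2) → h.totalDegree ≤ l →
    Bfun (2 * n - l) ≤ (Finset.univ.filter fun x : Fin n → ZMod 3 => eval x h ≠ 0).card := by
  induction n with
  | zero =>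
    intro l h h0 _ _
    obtain ⟨a, rfl⟩ := C_surjective (Fin 0) h
    have ha : a ≠ 0 := fun hc => h0 (by rw [hc, map_zero])
    have : (Finset.univ.filter fun x : Fin 0 → ZMod 3 => eval x (C a) ≠ 0) = Finset.univ := by
      refine Finset.filter_true_of_mem fun x _ => ?_
      rw [eval_C]; exact ha
    rw [this]
    have h2 : (2 * 0 - l) = 0 := by omega
    rw [h2]
    simp [Bfun, Finset.card_univ]
  | succ n IH =>
    intro l h h0 hdeg htd
    set p := finSuccEquiv (ZMod 3) n h with hp_def
    have hp0 : p ≠ 0 := by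
      rw [hp_def]
      exact (map_ne_zero_iff _ (finSuccEquiv (ZMod 3) n).injective).mpr h0
    set d := p.natDegree with hd_def
    have hdd : d = degreeOf 0 h := by rw [hd_def, hp_def, natDegree_finSuccEquiv]
    have hd2 : d ≤ 2 := hdd ▸ hdeg 0
    have hdl : d ≤ l := by
      rw [hdd]; exact (degreeOf_le_totalDegree h 0).trans htd
    set g := p.leadingCoeff with hg_def
    have hg0 : g ≠ 0 := Polynomial.leadingCoeff_ne_zero.mpr hp0
    have hgc : g = p.coeff d := by rw [hg_def, Polynomial.leadingCoeff]
    have hgdeg : ∀ i, g.degreeOf i ≤ 2 := by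
      intro i
      refine le_trans ?_ (hdeg i.succ)
      rw [hgc]
      exact degreeOf_coeff_finSuccEquiv h i _
    have hgtd : g.totalDegree ≤ l - d := by
      refine Finset.sup_le fun m hm => ?_
      have hc : coeff (m.cons d) h ≠ 0 := by
        rw [← finSuccEquiv_coeff_coeff]
        rw [hgc] at hm
        exact mem_support_iff.mp hm
      have hsum : (m.cons d).sum (fun _ e => e) ≤ l :=
        le_trans (le_totalDegree (mem_support_iff.mpr hc)) htd
      have hcons : (m.cons d).sum (fun _ e => e) = d + m.sum (fun _ e => e) := by
        rw [Finsupp.sum_fintype _ _ fun _ => rfl, Finsupp.sum_fintype _ _ fun _ => rfl,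
          Fin.sum_univ_succ]
        simp [Finsupp.cons_zero, Finsupp.cons_succ]
      omega
    have key : ∀ x : Fin n → ZMod 3, eval x g ≠ 0 →
        3 - d ≤ (Finset.univ.filter fun c : ZMod 3 =>
          ¬ Polynomial.eval c (Polynomial.map (eval x) p) = 0).card := by
      intro x hx
      set q := Polynomial.map (eval x) p with hq_def
      have hqc : q.coeff d = eval x g := by
        rw [hq_def, Polynomial.coeff_map, hgc]
      have hq0 : q ≠ 0 := fun hq => hx (by rw [← hqc, hq, Polynomial.coeff_zero])
      have hqd : q.natDegree ≤ d := by
        rw [hq_def, hd_def]; exact Polynomial.natDegree_map_le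
      have hsub : (Finset.univ.filter fun c : ZMod 3 => Polynomial.eval c q = 0) ⊆
          q.roots.toFinset := by
        intro c hc
        rw [Finset.mem_filter] at hc
        rw [Multiset.mem_toFinset, Polynomial.mem_roots hq0]
        exact hc.2
      have hzero : (Finset.univ.filter fun c : ZMod 3 => Polynomial.eval c q = 0).card ≤ d :=
        le_trans (Finset.card_le_card hsub)
          (le_trans (Multiset.toFinset_card_le _) (le_trans (Polynomial.card_roots' q) hqd))
      have hsplit := Finset.card_filter_add_card_filter_not
        (s := (Finset.univ : Finset (ZMod 3))) (p := fun c => Polynomial.eval c q = 0)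
      have huniv : (Finset.univ : Finset (ZMod 3)).card = 3 := by
        rw [Finset.card_univ]; rfl
      omega
    set NZg := Finset.univ.filter (fun x : Fin n → ZMod 3 => eval x g ≠ 0) with hNZg
    have hIH : Bfun (2 * n - (l - d)) ≤ NZg.card := IH (l - d) g hg0 hgdeg hgtd
    set S := NZg.biUnion (fun x => (Finset.univ.filter fun c : ZMod 3 =>
        ¬ Polynomial.eval c (Polynomial.map (eval x) p) = 0).image
        fun c => (Fin.cons c x : Fin (n+1) → ZMod 3))
      with hS_def
    have hdisj : ∀ x ∈ NZg, ∀ y ∈ NZg, x ≠ y →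
        Disjoint ((Finset.univ.filter fun c : ZMod 3 =>
          ¬ Polynomial.eval c (Polynomial.map (eval x) p) = 0).image
          fun c => (Fin.cons c x : Fin (n+1) → ZMod 3))
        ((Finset.univ.filter fun c : ZMod 3 =>
          ¬ Polynomial.eval c (Polynomial.map (eval y) p) = 0).image
          fun c => (Fin.cons c y : Fin (n+1) → ZMod 3)) := by
      intro x _ y _ hxy
      rw [Finset.disjoint_left]
      rintro z hz1 hz2
      obtain ⟨c1, _, rfl⟩ := Finset.mem_image.mp hz1
      obtain ⟨c2, _, hz⟩ := Finset.mem_image.mp hz2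
      apply hxy
      have := congrArg Fin.tail hz.symm
      rwa [Fin.tail_cons, Fin.tail_cons] at this
    have hcardS : (3 - d) * NZg.card ≤ S.card := by
      rw [hS_def, Finset.card_biUnion hdisj]
      have hinj : ∀ x : Fin n → ZMod 3, ((Finset.univ.filter fun c : ZMod 3 =>
          ¬ Polynomial.eval c (Polynomial.map (eval x) p) = 0).image
          fun c => (Fin.cons c x : Fin (n+1) → ZMod 3)).card
          = (Finset.univ.filter fun c : ZMod 3 =>
            ¬ Polynomial.eval c (Polynomial.map (eval x) p) = 0).card := by
        intro x
        refine Finset.card_image_of_injective _ fun c1 c2 hc => ?_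
        have := congrFun hc 0
        simpa using this
      calc (3 - d) * NZg.card = ∑ _x ∈ NZg, (3 - d) := by
            rw [Finset.sum_const, smul_eq_mul, mul_comm]
        _ ≤ _ := Finset.sum_le_sum fun x hx => by
            rw [hinj x]
            exact key x (Finset.mem_filter.mp hx).2
    have hSsub : S ⊆ Finset.univ.filter (fun y : Fin (n + 1) → ZMod 3 => eval y h ≠ 0) := by
      intro y hy
      rw [hS_def, Finset.mem_biUnion] at hy
      obtain ⟨x, _, hy⟩ := hy
      obtain ⟨c, hc, rfl⟩ := Finset.mem_image.mp hy
      rw [Finset.mem_filter]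
      refine ⟨Finset.mem_univ _, ?_⟩
      rw [eval_eq_eval_mv_eval']
      exact (Finset.mem_filter.mp hc).2
    calc Bfun (2 * (n + 1) - l) ≤ (3 - d) * Bfun (2 * n - (l - d)) := Bfun_step n l d hd2 hdl
      _ ≤ (3 - d) * NZg.card := Nat.mul_le_mul_left _ hIH
      _ ≤ S.card := hcardS
      _ ≤ _ := Finset.card_le_card hSsub

lemma ceil_le_Bfun (n l : ℕ) (hnl : l ≤ 2 * n) :
    ⌈(3 : ℝ) ^ ((n : ℝ) - (l : ℝ) / 2)⌉₊ ≤ Bfun (2 * n - l) := by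
  set e := 2 * n - l with he
  have hcast : (n : ℝ) - (l : ℝ) / 2 = (e : ℝ) / 2 := by
    rw [he, Nat.cast_sub hnl]
    push_cast
    ring
  rw [hcast]
  rcases Nat.even_or_odd e with ⟨k, hk⟩ | ⟨k, hk⟩
  · have hk' : e = 2 * k := by omega
    rw [hk', Bfun_even]
    have h2 : ((2 * k : ℕ) : ℝ) / 2 = (k : ℕ) := by push_cast; ring
    rw [h2, Real.rpow_natCast]
    have : ((3 : ℝ)) ^ (k : ℕ) = (((3 ^ k : ℕ)) : ℝ) := by push_cast; ring
    rw [this, Nat.ceil_natCast]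
  · rw [hk, Bfun_odd]
    have h2 : ((2 * k + 1 : ℕ) : ℝ) / 2 = (k : ℕ) + 1 / 2 := by push_cast; ring
    rw [h2]
    rw [Real.rpow_add (by norm_num : (0:ℝ) < 3), Real.rpow_natCast]
    refine Nat.ceil_le.mpr ?_
    have hsqrt : (3 : ℝ) ^ ((1 : ℝ) / 2) ≤ 2 := by
      rw [show (1 : ℝ) / 2 = 2⁻¹ by norm_num, Real.rpow_inv_le_iff_of_pos (by norm_num)
        (by norm_num) (by norm_num)]
      norm_num
    have h3 : (0:ℝ) ≤ (3:ℝ) ^ (k : ℕ) := by positivity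
    calc (3:ℝ) ^ (k:ℕ) * (3:ℝ) ^ ((1:ℝ)/2) ≤ (3:ℝ) ^ (k:ℕ) * 2 :=
          mul_le_mul_of_nonneg_left hsqrt h3
      _ = ((2 * 3 ^ k : ℕ) : ℝ) := by push_cast; ring

lemma factor_totalDegree {n : ℕ} (i j : Fin n) (c a : ZMod 3) :
    (X i + C c * X j - C a : MvPolynomial (Fin n) (ZMod 3)).totalDegree ≤ 1 := by
  have h1 : (X i + C c * X j - C a : MvPolynomial (Fin n) (ZMod 3))
      = X i + C c * X j + C (-a) := by rw [map_neg, sub_eq_add_neg]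
  rw [h1]
  refine le_trans (totalDegree_add _ _) (max_le (le_trans (totalDegree_add _ _) (max_le ?_ ?_)) ?_)
  · exact le_of_eq (totalDegree_X i)
  · refine le_trans (totalDegree_mul _ _) ?_
    rw [totalDegree_C, totalDegree_X]
  · rw [totalDegree_C]; omega

end Stmt14Aux

open Stmt14Aux in
theorem stmt_14 {n l : ℕ} (hn : 1 ≤ n) (i j : Fin l → Fin n) (hij : ∀ e, i e < j e)
    (ε : Fin l → ZMod 3) (hε : ∀ e, ε e = 1 ∨ ε e = -1) (a : Fin l → ZMod 3)
    (f : MvPolynomial (Fin n) (ZMod 3))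
    (hf : f = ∏ e : Fin l,
      (MvPolynomial.X (i e) + MvPolynomial.C (ε e) * MvPolynomial.X (j e)
        - MvPolynomial.C (a e)))
    (hpos : 0 < ({x : Fin n → ZMod 3 | MvPolynomial.eval x f ≠ 0}).ncard)
    (hnl : 2 * n ≥ l) :
    ⌈(3 : ℝ) ^ ((n : ℝ) - (l : ℝ) / 2)⌉₊ ≤
      ({x : Fin n → ZMod 3 | MvPolynomial.eval x f ≠ 0}).ncard := by
  classical
  have htdf : f.totalDegree ≤ l := by
    rw [hf]
    refine le_trans (totalDegree_finset_prod _ _) ?_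
    calc ∑ e : Fin l, (X (i e) + C (ε e) * X (j e) - C (a e) :
          MvPolynomial (Fin n) (ZMod 3)).totalDegree
        ≤ ∑ _e : Fin l, 1 := Finset.sum_le_sum fun e _ => factor_totalDegree _ _ _ _
      _ = l := by simp
  obtain ⟨x0, hx0⟩ := Set.nonempty_of_ncard_ne_zero hpos.ne'
  have hx0' : eval x0 f ≠ 0 := hx0
  have hh0 : red f ≠ 0 := by
    intro hr
    apply hx0'
    rw [← eval_red f x0, hr, map_zero]
  have hAF := AF3 n l (red f) hh0 (degreeOf_red_le f) ((totalDegree_red_le f).trans htdf)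
  have hfilter : (Finset.univ.filter fun x : Fin n → ZMod 3 => eval x (red f) ≠ 0)
      = (Finset.univ.filter fun x : Fin n → ZMod 3 => eval x f ≠ 0) := by
    refine Finset.filter_congr fun x _ => ?_
    rw [eval_red]
  have hncard : ({x : Fin n → ZMod 3 | eval x f ≠ 0}).ncard
      = (Finset.univ.filter fun x : Fin n → ZMod 3 => eval x f ≠ 0).card := by
    rw [Set.ncard_eq_toFinset_card', Set.toFinset_setOf]
  rw [hncard]
  refine le_trans (ceil_le_Bfun n l hnl) (le_trans hAF (le_of_eq ?_))
  rw [hfilter]
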